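/- If θ₁⁰ ≠ θ₂⁰, then λ₁^{opt} → 1 and λ₂^{opt} → 0 in probability as n₁ → ∞ and n₂ → ∞ (along any sequence of pairs (n₁, n₂) with both sample sizes tending to infinity). -/

import Mathlib

open MeasureTheory ProbabilityTheory Filter
open scoped Topology

/-- Leave-one-out mean from the first `n` observations, deleting the `j`-th one. -/
noncomputable def looM {Ω : Type*} (Y : ℕ → Ω → ℝ) (n j : ℕ) (ω : Ω) : ℝ :=
  (1 / ((n : ℝ) - 1)) * ∑ k ∈ (Finset.range n).erase j, Y k ω

/-- Sample mean of the first `n` observations. -/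
noncomputable def sampleM {Ω : Type*} (Y : ℕ → Ω → ℝ) (n : ℕ) (ω : Ω) : ℝ :=
  (1 / (n : ℝ)) * ∑ j ∈ Finset.range n, Y j ω

/-- Sample variance `σ̂₁²` of the first `n₁` observations. -/
noncomputable def sampleV {Ω : Type*} (Y : ℕ → Ω → ℝ) (n : ℕ) (ω : Ω) : ℝ :=
  (1 / (n : ℝ)) * ∑ j ∈ Finset.range n, (Y j ω - sampleM Y n ω) ^ 2

/-- The delete-one-point cross-validated weight
`λ₁^{opt} = [n₁(X̄₁ − X̄₂)² − (n₁/(n₁−1)) σ̂₁²] / ∑ⱼ (X̄₁^{(−j)} − X̄₂)²`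
(junk value when the denominator is `0`). -/
noncomputable def lam1u {Ω : Type*} (Y1 Y2 : ℕ → Ω → ℝ) (n1 n2 : ℕ) (ω : Ω) : ℝ :=
  ((n1 : ℝ) * (sampleM Y1 n1 ω - sampleM Y2 n2 ω) ^ 2
      - ((n1 : ℝ) / ((n1 : ℝ) - 1)) * sampleV Y1 n1 ω)
    / ∑ j ∈ Finset.range n1, (looM Y1 n1 j ω - sampleM Y2 n2 ω) ^ 2

lemma sampleV_eq {Ω : Type*} (Y : ℕ → Ω → ℝ) {n : ℕ} (hn : 1 ≤ n) (ω : Ω) :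
    sampleV Y n ω = (1/(n:ℝ)) * ∑ j ∈ Finset.range n, Y j ω ^ 2 - sampleM Y n ω ^ 2 := by
  have hn0 : (n:ℝ) ≠ 0 := Nat.cast_ne_zero.mpr (by omega)
  have hM : sampleM Y n ω = (1/(n:ℝ)) * ∑ j ∈ Finset.range n, Y j ω := rfl
  unfold sampleV
  rw [Finset.sum_congr rfl (fun j _ => sub_sq (Y j ω) (sampleM Y n ω))]
  rw [Finset.sum_add_distrib, Finset.sum_sub_distrib, Finset.sum_const, Finset.card_range]
  rw [hM]
  have : ∑ j ∈ Finset.range n, 2 * Y j ω * ((1/(n:ℝ)) * ∑ i ∈ Finset.range n, Y i ω)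
      = 2 * ((1/(n:ℝ)) * ∑ i ∈ Finset.range n, Y i ω) * ∑ j ∈ Finset.range n, Y j ω := by
    rw [← Finset.sum_mul, ← Finset.mul_sum]; ring
  rw [this]
  field_simp
  have hinv : (n:ℝ)^2 * (n:ℝ)⁻¹^2 = 1 := by field_simp
  linear_combination (∑ i ∈ Finset.range n, Y i ω) ^ 2 * hinv

lemma loo_sum_sq {Ω : Type*} (Y : ℕ → Ω → ℝ) {n : ℕ} (hn : 2 ≤ n) (ω : Ω) (c : ℝ) :
    ∑ j ∈ Finset.range n, (looM Y n j ω - c)^2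
      = (n:ℝ) * (sampleM Y n ω - c)^2 + (n:ℝ)/((n:ℝ)-1)^2 * sampleV Y n ω := by
  have hn0 : (n:ℝ) ≠ 0 := Nat.cast_ne_zero.mpr (by omega)
  have hn1 : (n:ℝ) - 1 ≠ 0 := by
    have : (2:ℝ) ≤ (n:ℝ) := by exact_mod_cast hn
    nlinarith
  set M := sampleM Y n ω with hMdef
  have hS : ∑ j ∈ Finset.range n, Y j ω = (n:ℝ) * M := by
    rw [hMdef]; unfold sampleM; field_simp
  have hloo : ∀ j ∈ Finset.range n,
      looM Y n j ω - c = (M - c) + (M - Y j ω)/((n:ℝ)-1) := by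
    intro j hj
    unfold looM
    rw [Finset.sum_erase_eq_sub hj, hS]
    field_simp
    ring
  rw [Finset.sum_congr rfl (fun j hj => by rw [hloo j hj])]
  have hexp : ∀ j ∈ Finset.range n,
      ((M - c) + (M - Y j ω)/((n:ℝ)-1))^2
        = (M - c)^2 + (2*(M-c)/((n:ℝ)-1)) * (M - Y j ω)
          + (1/((n:ℝ)-1)^2) * (Y j ω - M)^2 := by
    intro j _; field_simp; ring
  rw [Finset.sum_congr rfl hexp]
  rw [Finset.sum_add_distrib, Finset.sum_add_distrib, Finset.sum_const, Finset.card_range,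
    ← Finset.mul_sum, ← Finset.mul_sum, Finset.sum_sub_distrib, Finset.sum_const,
    Finset.card_range, hS]
  have hV : ∑ j ∈ Finset.range n, (Y j ω - M)^2 = (n:ℝ) * sampleV Y n ω := by
    unfold sampleV; rw [← hMdef]; field_simp
  rw [hV]
  field_simp
  simp only [nsmul_eq_mul]
  ring

lemma lam1u_eq {Ω : Type*} (X1 X2 : ℕ → Ω → ℝ) {n : ℕ} (m : ℕ) (hn : 2 ≤ n) (ω : Ω) :
    lam1u X1 X2 n m ω =
      ((sampleM X1 n ω - sampleM X2 m ω)^2 - sampleV X1 n ω * ((n:ℝ)-1)⁻¹)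
      / ((sampleM X1 n ω - sampleM X2 m ω)^2 + sampleV X1 n ω * (((n:ℝ)-1)⁻¹)^2) := by
  have hn0 : (n:ℝ) ≠ 0 := Nat.cast_ne_zero.mpr (by omega)
  unfold lam1u
  rw [loo_sum_sq X1 hn ω (sampleM X2 m ω)]
  have hnum : (n:ℝ) * (sampleM X1 n ω - sampleM X2 m ω) ^ 2
      - ((n:ℝ)/((n:ℝ)-1)) * sampleV X1 n ω
      = (n:ℝ) * ((sampleM X1 n ω - sampleM X2 m ω)^2 - sampleV X1 n ω * ((n:ℝ)-1)⁻¹) := by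
    rw [div_eq_mul_inv]; ring
  have hden : (n:ℝ) * (sampleM X1 n ω - sampleM X2 m ω) ^ 2
      + (n:ℝ)/((n:ℝ)-1)^2 * sampleV X1 n ω
      = (n:ℝ) * ((sampleM X1 n ω - sampleM X2 m ω)^2 + sampleV X1 n ω * (((n:ℝ)-1)⁻¹)^2) := by
    rw [div_eq_mul_inv, inv_pow]; ring
  rw [hnum, hden, mul_div_mul_left _ _ hn0]

lemma sampleM_meas {Ω : Type*} [MeasurableSpace Ω] {Y : ℕ → Ω → ℝ}
    (h : ∀ j, Measurable (Y j)) (n : ℕ) : Measurable (sampleM Y n) := by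
  unfold sampleM
  exact measurable_const.mul (Finset.measurable_sum _ (fun j _ => h j))

lemma sampleV_meas {Ω : Type*} [MeasurableSpace Ω] {Y : ℕ → Ω → ℝ}
    (h : ∀ j, Measurable (Y j)) (n : ℕ) : Measurable (sampleV Y n) := by
  unfold sampleV
  exact measurable_const.mul (Finset.measurable_sum _
    (fun j _ => ((h j).sub (sampleM_meas h n)).pow_const 2))

lemma looM_meas {Ω : Type*} [MeasurableSpace Ω] {Y : ℕ → Ω → ℝ}
    (h : ∀ j, Measurable (Y j)) (n j : ℕ) : Measurable (looM Y n j) := by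
  unfold looM
  exact measurable_const.mul (Finset.measurable_sum _ (fun k _ => h k))

lemma lam1u_meas {Ω : Type*} [MeasurableSpace Ω] {Y1 Y2 : ℕ → Ω → ℝ}
    (h1 : ∀ j, Measurable (Y1 j)) (h2 : ∀ j, Measurable (Y2 j)) (n1 n2 : ℕ) :
    Measurable (lam1u Y1 Y2 n1 n2) := by
  unfold lam1u
  refine Measurable.div ?_ ?_
  · exact (measurable_const.mul
        (((sampleM_meas h1 n1).sub (sampleM_meas h2 n2)).pow_const 2)).sub
      (measurable_const.mul (sampleV_meas h1 n1))
  · exact Finset.measurable_sum _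
      (fun j _ => ((looM_meas h1 n1 j).sub (sampleM_meas h2 n2)).pow_const 2)

/-- If `θ₁⁰ ≠ θ₂⁰`, then `λ₁^{opt} → 1` and `λ₂^{opt} → 0` in probability along any
sequence of pairs `(n₁, n₂)` with both sample sizes tending to infinity. -/
theorem stmt_11 {Ω : Type*} [MeasurableSpace Ω] (μ : Measure Ω) [IsProbabilityMeasure μ]
    (X1 X2 : ℕ → Ω → ℝ)
    (hmeas1 : ∀ j, Measurable (X1 j)) (hmeas2 : ∀ j, Measurable (X2 j))
    (hindep1 : iIndepFun X1 μ)
    (hindep2 : iIndepFun X2 μ)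
    (hident1 : ∀ j, IdentDistrib (X1 j) (X1 0) μ μ)
    (hident2 : ∀ j, IdentDistrib (X2 j) (X2 0) μ μ)
    (hindep12 : IndepFun (fun ω => fun j => X1 j ω) (fun ω => fun j => X2 j ω) μ)
    (hL2a : MemLp (X1 0) 2 μ) (hL2b : MemLp (X2 0) 2 μ)
    (θ1 θ2 : ℝ) (hθ1 : θ1 = ∫ ω, X1 0 ω ∂μ) (hθ2 : θ2 = ∫ ω, X2 0 ω ∂μ)
    (hne : θ1 ≠ θ2) :
    ∀ N1 N2 : ℕ → ℕ, Tendsto N1 atTop atTop → Tendsto N2 atTop atTop →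
      TendstoInMeasure μ (fun k => lam1u X1 X2 (N1 k) (N2 k)) atTop (fun _ => (1 : ℝ))
      ∧ TendstoInMeasure μ (fun k ω => 1 - lam1u X1 X2 (N1 k) (N2 k) ω) atTop
          (fun _ => (0 : ℝ)) := by
  intro N1 N2 hN1 hN2
  have hsqm : Measurable fun x : ℝ => x ^ 2 := measurable_id.pow_const 2
  have hint1 : Integrable (X1 0) μ := hL2a.integrable one_le_two
  have hint2 : Integrable (X2 0) μ := hL2b.integrable one_le_two
  have hintsq : Integrable (fun ω => X1 0 ω ^ 2) μ := hL2a.integrable_sq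
  have lln1 := ProbabilityTheory.strong_law_ae_real X1 hint1
    (fun i j hij => hindep1.indepFun hij) hident1
  have lln2 := ProbabilityTheory.strong_law_ae_real X2 hint2
    (fun i j hij => hindep2.indepFun hij) hident2
  have lln3 := ProbabilityTheory.strong_law_ae_real (fun j ω => X1 j ω ^ 2) hintsq
    (fun i j hij => (hindep1.indepFun hij).comp hsqm hsqm)
    (fun j => (hident1 j).comp hsqm)
  set m2 : ℝ := ∫ ω, X1 0 ω ^ 2 ∂μ with hm2
  have hδ : θ1 - θ2 ≠ 0 := sub_ne_zero.mpr hne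
  have hae : ∀ᵐ ω ∂μ, Tendsto (fun k => lam1u X1 X2 (N1 k) (N2 k) ω) atTop (𝓝 1) := by
    filter_upwards [lln1, lln2, lln3] with ω h1 h2 h3
    have e1 : (fun n : ℕ => sampleM X1 n ω)
        = fun n : ℕ => (∑ i ∈ Finset.range n, X1 i ω) / n := by
      funext n; rw [sampleM, one_div, inv_mul_eq_div]
    have e2 : (fun n : ℕ => sampleM X2 n ω)
        = fun n : ℕ => (∑ i ∈ Finset.range n, X2 i ω) / n := by
      funext n; rw [sampleM, one_div, inv_mul_eq_div]
    have hM1 : Tendsto (fun n : ℕ => sampleM X1 n ω) atTop (𝓝 θ1) := by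
      rw [hθ1, e1]; exact h1
    have hM2 : Tendsto (fun n : ℕ => sampleM X2 n ω) atTop (𝓝 θ2) := by
      rw [hθ2, e2]; exact h2
    have hQ : Tendsto (fun n : ℕ => (1/(n:ℝ)) * ∑ j ∈ Finset.range n, X1 j ω ^ 2)
        atTop (𝓝 m2) := by
      have e3 : (fun n : ℕ => (1/(n:ℝ)) * ∑ j ∈ Finset.range n, X1 j ω ^ 2)
          = fun n : ℕ => (∑ i ∈ Finset.range n, X1 i ω ^ 2) / n := by
        funext n; rw [one_div, inv_mul_eq_div]
      rw [e3]; exact h3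
    have hV : Tendsto (fun n : ℕ => sampleV X1 n ω) atTop (𝓝 (m2 - θ1 ^ 2)) := by
      refine Tendsto.congr' ?_ (hQ.sub (hM1.pow 2))
      filter_upwards [eventually_ge_atTop 1] with n hn
      exact (sampleV_eq X1 hn ω).symm
    have hM1k := hM1.comp hN1
    have hM2k := hM2.comp hN2
    have hVk := hV.comp hN1
    have hd : Tendsto (fun k => sampleM X1 (N1 k) ω - sampleM X2 (N2 k) ω) atTop
        (𝓝 (θ1 - θ2)) := hM1k.sub hM2k
    have hninv : Tendsto (fun k => ((N1 k : ℝ) - 1)⁻¹) atTop (𝓝 0) := by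
      apply Tendsto.inv_tendsto_atTop
      have : Tendsto (fun k => ((N1 k : ℝ))) atTop atTop :=
        tendsto_natCast_atTop_atTop.comp hN1
      simpa [sub_eq_add_neg] using tendsto_atTop_add_const_right atTop (-1 : ℝ) this
    have hA : Tendsto (fun k => (sampleM X1 (N1 k) ω - sampleM X2 (N2 k) ω) ^ 2
        - sampleV X1 (N1 k) ω * ((N1 k : ℝ) - 1)⁻¹) atTop (𝓝 ((θ1 - θ2) ^ 2)) := by
      have := (hd.pow 2).sub (hVk.mul hninv)
      simpa using this
    have hB : Tendsto (fun k => (sampleM X1 (N1 k) ω - sampleM X2 (N2 k) ω) ^ 2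
        + sampleV X1 (N1 k) ω * (((N1 k : ℝ) - 1)⁻¹) ^ 2) atTop (𝓝 ((θ1 - θ2) ^ 2)) := by
      have := (hd.pow 2).add (hVk.mul (hninv.pow 2))
      simpa using this
    have hratio := hA.div hB (pow_ne_zero 2 hδ)
    rw [div_self (pow_ne_zero 2 hδ)] at hratio
    refine Tendsto.congr' ?_ hratio
    filter_upwards [hN1.eventually_ge_atTop 2] with k hk
    exact (lam1u_eq X1 X2 (N2 k) hk ω).symm
  have hmeaslam : ∀ k, AEStronglyMeasurable (lam1u X1 X2 (N1 k) (N2 k)) μ :=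
    fun k => (lam1u_meas hmeas1 hmeas2 (N1 k) (N2 k)).aestronglyMeasurable
  constructor
  · exact tendstoInMeasure_of_tendsto_ae hmeaslam hae
  · refine tendstoInMeasure_of_tendsto_ae
      (fun k => aestronglyMeasurable_const.sub (hmeaslam k)) ?_
    filter_upwards [hae] with ω h
    simpa using (tendsto_const_nhds (x := (1:ℝ))).sub h
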